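/- In the setting of the 1D Coulomb gas ε² ẍ_i = −2 x_i + 2(2i−1−N)/N with initial data v_i⁰ = 0 and x_i⁰ = (2i−1−N)/N + 1/N for each 1 ≤ i ≤ N: the particles preserve their order for all times (indeed x_{i+1}(t) − x_i(t) = 2/N for all t), the explicit solution is x_i(t) = (1/N) cos(√2 t/ε) + (2i−1−N)/N and v_i(t) = −(√2/(Nε)) sin(√2 t/ε), and hence the empirical current J_N(t) = (1/N)∑_i v_i(t) δ_{x_i(t)} equals −(√2 sin(√2 t/ε)/(Nε)) μ_N(t), where μ_N(t) is the empirical spatial measure. -/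

import Mathlib

open Finset

/-- The perturbed-lattice solution of the 1D Coulomb gas
`ε² ẍ_i = −2 x_i + 2(2i−1−N)/N` with `v_i⁰ = 0`, `x_i⁰ = (2i−1−N)/N + 1/N`
(0-based indices: `2i+1−N`): gaps are constant `2/N`, the solution is
`x_i(t) = (1/N) cos(√2 t/ε) + (2i−1−N)/N`, `v_i(t) = −(√2/(Nε)) sin(√2 t/ε)`,
and the empirical current satisfies
`J_N(t) = −(√2 sin(√2 t/ε)/(Nε)) μ_N(t)` (tested against any function `φ`). -/
theorem oneD_coulomb_lattice_current (N : ℕ) (hN : 0 < N) (ε : ℝ) (hε : 0 < ε)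
    (x v : Fin N → ℝ → ℝ)
    (hx : ∀ i t, HasDerivAt (x i) (v i t) t)
    (hv : ∀ i t, HasDerivAt (v i)
      ((-2 * x i t + 2 * (2 * ((i : ℕ) : ℝ) + 1 - N) / N) / ε ^ 2) t)
    (hx0 : ∀ i, x i 0 = (2 * ((i : ℕ) : ℝ) + 1 - N) / N + 1 / N)
    (hv0 : ∀ i, v i 0 = 0) :
    (∀ (t : ℝ) (i : Fin N) (hsucc : (i : ℕ) + 1 < N),
        x ⟨(i : ℕ) + 1, hsucc⟩ t - x i t = 2 / N) ∧
    (∀ (t : ℝ) (i : Fin N),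
        x i t = (1 / (N : ℝ)) * Real.cos (Real.sqrt 2 * t / ε)
          + (2 * ((i : ℕ) : ℝ) + 1 - N) / N) ∧
    (∀ (t : ℝ) (i : Fin N),
        v i t = -(Real.sqrt 2 / ((N : ℝ) * ε)) * Real.sin (Real.sqrt 2 * t / ε)) ∧
    (∀ (t : ℝ) (φ : ℝ → ℝ),
        (1 / (N : ℝ)) * ∑ i, v i t * φ (x i t)
          = -(Real.sqrt 2 * Real.sin (Real.sqrt 2 * t / ε) / ((N : ℝ) * ε))
              * ((1 / (N : ℝ)) * ∑ i, φ (x i t))) := by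
  have hNR : (0:ℝ) < N := by exact_mod_cast hN
  set ω : ℝ := Real.sqrt 2 / ε with hωdef
  have hω2 : ω ^ 2 = 2 / ε ^ 2 := by
    rw [hωdef, div_pow, Real.sq_sqrt (by norm_num : (0:ℝ) ≤ 2)]
  have hωt : ∀ t : ℝ, ω * t = Real.sqrt 2 * t / ε := by
    intro t; rw [hωdef]; ring
  -- main solution identity
  have key : ∀ (i : Fin N) (t : ℝ),
      x i t = (1/(N:ℝ)) * Real.cos (ω * t) + (2 * ((i:ℕ):ℝ) + 1 - N)/N ∧
      v i t = -(ω/N) * Real.sin (ω * t) := by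
    intro i
    set c : ℝ := (2 * ((i:ℕ):ℝ) + 1 - N)/N with hc
    set u : ℝ → ℝ := fun t => x i t - (1/(N:ℝ)) * Real.cos (ω*t) - c with hu
    set w : ℝ → ℝ := fun t => v i t + (ω/N) * Real.sin (ω*t) with hw
    have hlin : ∀ t : ℝ, HasDerivAt (fun s => ω * s) ω t := by
      intro t
      simpa using (hasDerivAt_id t).const_mul ω
    have hu' : ∀ t, HasDerivAt u (w t) t := by
      intro t
      have h := ((hx i t).sub (((hlin t).cos).const_mul (1/(N:ℝ)))).sub_const c
      refine h.congr_deriv ?_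
      simp [hw]; ring
    have hw' : ∀ t, HasDerivAt w (-(ω^2) * u t) t := by
      intro t
      have h := (hv i t).add (((hlin t).sin).const_mul (ω/N))
      refine h.congr_deriv ?_
      have : (-2 * x i t + 2 * (2 * ((i:ℕ):ℝ) + 1 - N) / N) / ε ^ 2
          = -(ω^2) * (x i t - c) := by
        rw [hω2, hc]; field_simp; ring
      rw [this]
      simp only [hu]
      ring
    set E : ℝ → ℝ := fun t => w t ^ 2 + ω^2 * u t ^ 2 with hE
    have hE' : ∀ t, HasDerivAt E 0 t := by
      intro t
      have h := (((hw' t).pow 2)).add (((hu' t).pow 2).const_mul (ω^2))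
      refine h.congr_deriv ?_
      ring
    have hEconst : ∀ t, E t = E 0 :=
      fun t => is_const_of_deriv_eq_zero
        (fun s => (hE' s).differentiableAt) (fun s => (hE' s).deriv) t 0
    have hu0 : u 0 = 0 := by
      simp [hu, hx0 i, hc]
    have hw0 : w 0 = 0 := by
      simp [hw, hv0 i]
    have hE0 : E 0 = 0 := by simp [hE, hu0, hw0]
    intro t
    have hEt : w t ^ 2 + ω^2 * u t ^ 2 = 0 := by
      have := hEconst t; rw [hE0] at this; simpa [hE] using this
    have hωpos : 0 < ω := div_pos (Real.sqrt_pos.mpr (by norm_num)) hε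
    have h1 : w t ^ 2 = 0 ∧ ω^2 * u t ^ 2 = 0 := by
      constructor <;> nlinarith [sq_nonneg (w t), sq_nonneg (u t), sq_nonneg ω,
        mul_nonneg (sq_nonneg ω) (sq_nonneg (u t))]
    have hut : u t = 0 := by
      have := h1.2
      have hω2ne : ω^2 ≠ 0 := by positivity
      have : u t ^ 2 = 0 := (mul_eq_zero.mp this).resolve_left hω2ne
      exact pow_eq_zero_iff (by norm_num) |>.mp this
    have hwt : w t = 0 := pow_eq_zero_iff (by norm_num) |>.mp h1.1
    constructor
    · have := hut; simp only [hu] at this; linarith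
    · have := hwt; simp only [hw] at this; linarith
  have hxf : ∀ (t : ℝ) (i : Fin N),
      x i t = (1/(N:ℝ)) * Real.cos (Real.sqrt 2 * t / ε)
        + (2 * ((i:ℕ):ℝ) + 1 - N)/N := by
    intro t i; rw [← hωt]; exact (key i t).1
  have hvf : ∀ (t : ℝ) (i : Fin N),
      v i t = -(Real.sqrt 2 / ((N:ℝ) * ε)) * Real.sin (Real.sqrt 2 * t / ε) := by
    intro t i
    rw [← hωt]
    have := (key i t).2
    rw [this, hωdef]
    ring_nf
  refine ⟨?_, hxf, hvf, ?_⟩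
  · intro t i hsucc
    rw [hxf t i, hxf t ⟨(i:ℕ)+1, hsucc⟩]
    have hNne : (N:ℝ) ≠ 0 := ne_of_gt hNR
    push_cast
    field_simp
    ring
  · intro t φ
    calc (1 / (N : ℝ)) * ∑ i, v i t * φ (x i t)
        = (1 / (N : ℝ)) * ∑ i, (-(Real.sqrt 2 / ((N:ℝ) * ε)) * Real.sin (Real.sqrt 2 * t / ε)) * φ (x i t) := by
          congr 1; apply Finset.sum_congr rfl; intro i _; rw [hvf t i]
      _ = -(Real.sqrt 2 * Real.sin (Real.sqrt 2 * t / ε) / ((N : ℝ) * ε))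
            * ((1 / (N : ℝ)) * ∑ i, φ (x i t)) := by
          rw [← Finset.mul_sum]; ring
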